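/- Let G be a directed graph on the vertex set {1,…,N} with neighbor sets N_κ, let N_max := max_κ |N_κ| ≥ 1, and for each vertex κ let f_κ : ℝⁿ × (ℝⁿ)^{N_κ} → ℝⁿ satisfy: |f_κ(x, b)| ≤ M for all arguments, |f_κ(x, b) − f_κ(x, b')| ≤ L₁ |b − b'|, and |f_κ(x, b) − f_κ(x', b)| ≤ L₂ |x − x'|, with constants M, L₁, L₂ > 0. Fix m ≥ 1, assign to each vertex κ an initial point x_{κ,G} ∈ ℝⁿ, fix a vertex i and a neighbor ℓ ∈ N_i, and assume the initial points used for i and for ℓ agree on N̄_i^m ∩ N̄_ℓ^m (consistent cell configurations). Let (χ_κ^{[i]}) and (χ_κ^{[ℓ]}) denote the reference solutions associated with i and ℓ respectively (per Definition of reference trajectories: if N_i^{m+1} = ∅ these solve χ̇_κ = f_κ(χ_κ, (χ_j)_{j∈N_κ}) for κ ∈ N̄_i^m with χ_κ(0) = x_{κ,G}; if N_i^{m+1} ≠ ∅ they solve this system only for κ ∈ N̄_i^{m−1}, with χ_κ(t) := x_{κ,G} held constant for κ ∈ N_i^m; and analogously for ℓ). Let t* be the unique positive solution of e^{L₂ t}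 − (L₂ + L₂²/(L₁ √N_max)) t − 1 = 0, and define H₁(t) := M t and H_{κ+1}(t) := ∫_0^t e^{L₂(t−s)} L₁ √N_max H_κ(s) ds for κ ≥ 1. Then |χ_ℓ^{[i]}(t) − χ_ℓ^{[ℓ]}(t)| ≤ H_m(t) for all t ∈ [0, t*]. -/

import Mathlib

/-- `hasPath E m j i` : there is a directed path of length `m` from `j` to `i`. -/
def hasPath {V : Type*} (E : V → V → Prop) : ℕ → V → V → Prop
  | 0, j, i => j = i
  | (n + 1), j, i => ∃ k, E j k ∧ hasPath E n k i

/-- The neighbor set `N_i` of `i` : vertices `j ≠ i` with an edge `(j, i)`. -/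
def nbr {V : Type*} (E : V → V → Prop) (i : V) : Set V := {j | j ≠ i ∧ E j i}

/-- `nset E i m` = `N_i^m` : for `m ≥ 1`, the vertices `j ≠ i` from which `i` is
reachable by a path of length `m` but by no shorter path; `N_i^0 = {i}`. -/
def nset {V : Type*} (E : V → V → Prop) (i : V) : ℕ → Set V
  | 0 => {i}
  | (m + 1) => {j | j ≠ i ∧ hasPath E (m + 1) j i ∧ ∀ k < m + 1, ¬ hasPath E k j i}

/-- The `m`-neighbor set `N̄_i^m = ⋃_{k ≤ m} N_i^k` of `i`. -/
def nbar {V : Type*} (E : V → V → Prop) (i : V) (m : ℕ) : Set V :=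
  ⋃ k ∈ Set.Iic m, nset E i k

/-- The neighbors of `κ` as a finset. -/
def nbrFinset {Nv : ℕ} (E : Fin Nv → Fin Nv → Prop) [DecidableRel E] (κ : Fin Nv) :
    Finset (Fin Nv) :=
  Finset.univ.filter fun j => j ≠ κ ∧ E j κ

namespace StmtAux

variable {V : Type*} {E : V → V → Prop}

lemma hasPath_snoc {p : ℕ} {j l i : V} (h : hasPath E p j l) (e : E l i) :
    hasPath E (p + 1) j i := by
  induction p generalizing j with
  | zero => cases h; exact ⟨i, e, rfl⟩
  | succ p ih => obtain ⟨k, hjk, hk⟩ := h; exact ⟨k, hjk, ih hk⟩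

lemma mem_nbar_iff {i j : V} {k : ℕ} :
    j ∈ nbar E i k ↔ ∃ p ≤ k, hasPath E p j i := by
  classical
  constructor
  · intro hj
    simp only [nbar, Set.mem_iUnion, Set.mem_Iic] at hj
    obtain ⟨p, hpk, hp⟩ := hj
    cases p with
    | zero => exact ⟨0, hpk, hp⟩
    | succ q => exact ⟨q + 1, hpk, hp.2.1⟩
  · rintro ⟨p, hpk, hp⟩
    have hex : ∃ q, hasPath E q j i := ⟨p, hp⟩
    have hmin : ∀ q < Nat.find hex, ¬ hasPath E q j i := fun q hq => Nat.find_min hex hq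
    have hle : Nat.find hex ≤ k := le_trans (Nat.find_min' hex hp) hpk
    simp only [nbar, Set.mem_iUnion, Set.mem_Iic]
    refine ⟨Nat.find hex, hle, ?_⟩
    cases hfind : Nat.find hex with
    | zero =>
      have := Nat.find_spec hex
      rw [hfind] at this
      exact this
    | succ q =>
      have hspec := Nat.find_spec hex
      rw [hfind] at hspec
      refine ⟨?_, hspec, ?_⟩
      · intro hji
        have : hasPath E 0 j i := hji
        have := Nat.find_min' hex this
        omega
      · intro k' hk'
        have : k' < Nat.find hex := by omega
        exact hmin k' this

lemma nbar_mono {i : V} {k k' : ℕ} (h : k ≤ k') : nbar E i k ⊆ nbar E i k' := by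
  intro j hj
  rw [mem_nbar_iff] at hj ⊢
  obtain ⟨p, hp, hpath⟩ := hj
  exact ⟨p, hp.trans h, hpath⟩

lemma self_mem_nbar (i : V) (k : ℕ) : i ∈ nbar E i k :=
  mem_nbar_iff.2 ⟨0, Nat.zero_le _, rfl⟩

lemma nbar_step {j κ i : V} {k : ℕ} (e : E j κ) (h : κ ∈ nbar E i k) :
    j ∈ nbar E i (k + 1) := by
  rw [mem_nbar_iff] at h ⊢
  obtain ⟨p, hp, hpath⟩ := h
  exact ⟨p + 1, by omega, ⟨κ, e, hpath⟩⟩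

lemma nbar_transfer {ℓ i j : V} {k : ℕ} (e : E ℓ i) (h : j ∈ nbar E ℓ k) :
    j ∈ nbar E i (k + 1) := by
  rw [mem_nbar_iff] at h ⊢
  obtain ⟨p, hp, hpath⟩ := h
  exact ⟨p + 1, by omega, hasPath_snoc hpath e⟩

lemma nbar_cases {j i : V} {m : ℕ} (h : j ∈ nbar E i m) :
    j ∈ nbar E i (m - 1) ∨ j ∈ nset E i m := by
  simp only [nbar, Set.mem_iUnion, Set.mem_Iic] at h
  obtain ⟨p, hpm, hp⟩ := h
  rcases eq_or_lt_of_le hpm with rfl | hlt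
  · exact Or.inr hp
  · left
    simp only [nbar, Set.mem_iUnion, Set.mem_Iic]
    exact ⟨p, by omega, hp⟩

lemma not_mem_nbar_of_mem_nset {j i : V} {m : ℕ} (hm : 1 ≤ m) (h : j ∈ nset E i m)
    {k : ℕ} (hk : k < m) : j ∉ nbar E i k := by
  intro hmem
  obtain ⟨p, hp, hpath⟩ := mem_nbar_iff.1 hmem
  obtain ⟨m', rfl⟩ : ∃ m', m = m' + 1 := ⟨m - 1, by omega⟩
  exact h.2.2 p (by omega) hpath

lemma mem_nset_one {ℓ i : V} (hℓ : ℓ ∈ nbr E i) : ℓ ∈ nset E i 1 := by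
  refine ⟨hℓ.1, ⟨i, hℓ.2, rfl⟩, ?_⟩
  intro k hk
  interval_cases k
  exact fun h => hℓ.1 h

lemma nbar_absorb {i : V} {m : ℕ} (hempty : nset E i (m + 1) = ∅) :
    ∀ p j, hasPath E p j i → j ∈ nbar E i m := by
  intro p
  induction p using Nat.strong_induction_on with
  | _ p ih =>
    intro j hp
    classical
    have hex : ∃ q, hasPath E q j i := ⟨p, hp⟩
    have hp₀ : hasPath E (Nat.find hex) j i := Nat.find_spec hex
    have hmin : ∀ q < Nat.find hex, ¬ hasPath E q j i := fun q hq => Nat.find_min hex hq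
    have hp₀p : Nat.find hex ≤ p := Nat.find_min' hex hp
    by_cases h1 : Nat.find hex ≤ m
    · exact mem_nbar_iff.2 ⟨Nat.find hex, h1, hp₀⟩
    · push_neg at h1
      have hne : j ≠ i := by
        intro hji
        exact hmin 0 (by omega) hji
      rcases eq_or_lt_of_le (Nat.succ_le_of_lt h1) with heq | hlt
      · exfalso
        have : j ∈ nset E i (m + 1) := by
          refine ⟨hne, ?_, ?_⟩
          · rw [show m + 1 = Nat.find hex from heq]; exact hp₀
          · intro k hk; exact hmin k (by omega)
        rw [hempty] at this
        exact this
      · obtain ⟨q, hq⟩ : ∃ q, Nat.find hex = q + 1 := ⟨Nat.find hex - 1, by omega⟩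
        rw [hq] at hp₀
        obtain ⟨κ, e, hpath⟩ := hp₀
        have hκ : κ ∈ nbar E i m := ih q (by omega) κ hpath
        obtain ⟨q', hq'm, hq'⟩ := mem_nbar_iff.1 hκ
        exact absurd (⟨κ, e, hq'⟩ : hasPath E (q' + 1) j i) (hmin (q' + 1) (by omega))





open Set intervalIntegral

lemma expK_hasDerivAt (K u : ℝ) :
    HasDerivAt (fun u => Real.exp (K * u)) (K * Real.exp (K * u)) u := by
  have h := (Real.hasDerivAt_exp (K * u)).comp u ((hasDerivAt_id u).const_mul K)
  exact h.congr_deriv (by ring)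

lemma speed_bound {F : Type*} [NormedAddCommGroup F] [NormedSpace ℝ F]
    {χ : ℝ → F} {d : ℝ → F} {M : ℝ}
    (hd : ∀ t ∈ Set.Ici (0:ℝ), HasDerivWithinAt χ (d t) (Set.Ici 0) t)
    (hM : ∀ t ∈ Set.Ici (0:ℝ), ‖d t‖ ≤ M) :
    ∀ t ∈ Set.Ici (0:ℝ), ‖χ t - χ 0‖ ≤ M * t := by
  intro t ht
  have hcont : ContinuousOn χ (Set.Icc 0 t) := fun x hx =>
    ((hd x hx.1).continuousWithinAt).mono (Set.Icc_subset_Ici_self)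
  have := norm_image_sub_le_of_norm_deriv_right_le_segment hcont
    (fun x hx => (hd x hx.1).mono (Set.Ici_subset_Ici.2 hx.1))
    (fun x hx => hM x hx.1) t (Set.mem_Icc.2 ⟨ht, le_rfl⟩)
  simpa using this

lemma cont_of_deriv {F : Type*} [NormedAddCommGroup F] [NormedSpace ℝ F]
    {χ : ℝ → F} {d : ℝ → F}
    (hd : ∀ t ∈ Set.Ici (0:ℝ), HasDerivWithinAt χ (d t) (Set.Ici 0) t) :
    ContinuousOn χ (Set.Ici 0) := fun x hx => (hd x hx).continuousWithinAt

lemma gronwall_aux {F : Type*} [NormedAddCommGroup F] [NormedSpace ℝ F]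
    {g g' : ℝ → F} {φ : ℝ → ℝ} {K T : ℝ}
    (hg : ContinuousOn g (Set.Icc 0 T))
    (hd : ∀ t ∈ Set.Ico 0 T, HasDerivWithinAt g (g' t) (Set.Ici t) t)
    (h0 : g 0 = 0) (hφ : Continuous φ)
    (hb : ∀ t ∈ Set.Ico 0 T, ‖g' t‖ ≤ K * ‖g t‖ + φ t) :
    ∀ t ∈ Set.Icc 0 T, ‖g t‖ ≤ ∫ s in (0:ℝ)..t, Real.exp (K * (t - s)) * φ s := by
  intro t ht
  set ψ : ℝ → ℝ := fun s => Real.exp (-K * s) * φ s with hψ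
  have hψc : Continuous ψ :=
    (Real.continuous_exp.comp (continuous_const.mul continuous_id)).mul hφ
  set I : ℝ → ℝ := fun u => ∫ s in (0:ℝ)..u, ψ s with hI
  have hIder : ∀ u, HasDerivAt I (ψ u) u := fun u =>
    intervalIntegral.integral_hasDerivAt_right (hψc.intervalIntegrable _ _)
      (hψc.stronglyMeasurableAtFilter _ _) hψc.continuousAt
  have key : (∫ s in (0:ℝ)..t, Real.exp (K * (t - s)) * φ s) = Real.exp (K * t) * I t := by
    rw [hI]
    simp only
    rw [← intervalIntegral.integral_const_mul]
    apply intervalIntegral.integral_congr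
    intro s _
    simp only [hψ]
    rw [← mul_assoc, ← Real.exp_add]
    ring_nf
  rw [key]
  have main : ∀ δ > 0, ‖g t‖ ≤ Real.exp (K * t) * (I t + δ * (t + 1)) := by
    intro δ hδ
    set B : ℝ → ℝ := fun u => Real.exp (K * u) * (I u + δ * (u + 1)) with hB
    set B' : ℝ → ℝ := fun u => K * B u + φ u + δ * Real.exp (K * u) with hB'
    have hBder : ∀ u, HasDerivAt B (B' u) u := by
      intro u
      have h2 : HasDerivAt (fun u => I u + δ * (u + 1)) (ψ u + δ) u := by
        have := (hIder u).add (((hasDerivAt_id u).add_const 1).const_mul δ)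
        exact this.congr_deriv (by ring)
      have h3 := (expK_hasDerivAt K u).mul h2
      refine h3.congr_deriv (Eq.symm ?_)
      have hexp : Real.exp (K * u) * Real.exp (-K * u) = 1 := by
        rw [← Real.exp_add]; ring_nf; exact Real.exp_zero
      simp only [hB', hB, hψ]
      linear_combination (-(φ u)) * hexp
    have happ := image_norm_le_of_norm_deriv_right_lt_deriv_boundary
      (f := g) (f' := g') (B := B) (B' := B')
      (hg.mono (Set.Icc_subset_Icc le_rfl ht.2))
      (fun x hx => hd x ⟨hx.1, lt_of_lt_of_le hx.2 ht.2⟩)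
      (by
        simp only [hB, h0, norm_zero, hI]
        rw [intervalIntegral.integral_same]
        positivity)
      hBder
      (by
        intro x hx heq
        have hbx := hb x ⟨hx.1, lt_of_lt_of_le hx.2 ht.2⟩
        have hpos : 0 < δ * Real.exp (K * x) := by positivity
        rw [heq] at hbx
        simp only [hB']
        linarith)
    exact happ (Set.mem_Icc.2 ⟨ht.1, le_rfl⟩)
  apply le_of_forall_pos_le_add
  intro ε hε
  have ht1 : (0:ℝ) < t + 1 := by linarith [ht.1]
  have hepos : (0:ℝ) < Real.exp (K * t) * (t + 1) := by positivity
  have := main (ε / (Real.exp (K * t) * (t + 1))) (by positivity)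
  calc ‖g t‖ ≤ Real.exp (K * t) * (I t + ε / (Real.exp (K * t) * (t + 1)) * (t + 1)) := this
    _ = Real.exp (K * t) * I t + ε := by field_simp





open Set intervalIntegral

lemma int_exp_rewrite (K : ℝ) (φ : ℝ → ℝ) (t : ℝ) :
    (∫ s in (0:ℝ)..t, Real.exp (K * (t - s)) * φ s) =
      Real.exp (K * t) * ∫ s in (0:ℝ)..t, Real.exp (-K * s) * φ s := by
  rw [← intervalIntegral.integral_const_mul]
  apply intervalIntegral.integral_congr
  intro s _
  show Real.exp (K * (t - s)) * φ s = Real.exp (K * t) * (Real.exp (-K * s) * φ s)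
  rw [← mul_assoc, ← Real.exp_add]
  ring_nf

section Hprops

variable {L₂ M C tstar : ℝ} {H : ℕ → ℝ → ℝ}
variable (hL₂ : 0 < L₂) (hM : 0 < M) (hC : 0 < C) (htpos : 0 < tstar)
variable (hroot : Real.exp (L₂ * tstar) - (L₂ + L₂ ^ 2 / C) * tstar - 1 = 0)
variable (hH1 : ∀ t, H 1 t = M * t)
variable (hHrec : ∀ κ, 1 ≤ κ → ∀ t, H (κ + 1) t =
      ∫ s in (0:ℝ)..t, Real.exp (L₂ * (t - s)) * (C * H κ s))

include hH1 hHrec in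
lemma H_cont : ∀ r, 1 ≤ r → Continuous (H r) := by
  intro r hr
  induction r, hr using Nat.le_induction with
  | base =>
    have : Continuous (fun t : ℝ => M * t) := by continuity
    exact this.congr (fun t => (hH1 t).symm)
  | succ r hr ih =>
    have hψc : Continuous (fun s => Real.exp (-L₂ * s) * (C * H r s)) :=
      (Real.continuous_exp.comp (continuous_const.mul continuous_id)).mul
        (continuous_const.mul ih)
    have hIc : Continuous (fun t => ∫ s in (0:ℝ)..t, Real.exp (-L₂ * s) * (C * H r s)) := by
      apply continuous_iff_continuousAt.2
      intro u
      exact (intervalIntegral.integral_hasDerivAt_right (hψc.intervalIntegrable _ _)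
        (hψc.stronglyMeasurableAtFilter _ _) hψc.continuousAt).continuousAt
    have : Continuous (fun t => Real.exp (L₂ * t) *
        ∫ s in (0:ℝ)..t, Real.exp (-L₂ * s) * (C * H r s)) :=
      (Real.continuous_exp.comp (continuous_const.mul continuous_id)).mul hIc
    apply this.congr
    intro t
    rw [hHrec r hr t, int_exp_rewrite]

include hM hC hH1 hHrec in
lemma H_nonneg : ∀ r, 1 ≤ r → ∀ t, 0 ≤ t → 0 ≤ H r t := by
  intro r hr
  induction r, hr using Nat.le_induction with
  | base => intro t ht; rw [hH1]; positivity
  | succ r hr ih =>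
    intro t ht
    rw [hHrec r hr t]
    apply intervalIntegral.integral_nonneg ht
    intro u hu
    exact mul_nonneg (Real.exp_pos _).le (mul_nonneg hC.le (ih u hu.1))

include hL₂ hM hC htpos hroot hH1 hHrec in
lemma H_mono_step : ∀ r, 1 ≤ r → ∀ t ∈ Set.Icc 0 tstar, H (r + 1) t ≤ H r t := by
  have hcont := H_cont hH1 hHrec
  intro r hr
  induction r, hr using Nat.le_induction with
  | base =>
    intro t ht
    -- evaluate H 2 t
    have heval : H 2 t = C * M / L₂ ^ 2 * (Real.exp (L₂ * t) - 1 - L₂ * t) := by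
      rw [hHrec 1 le_rfl t]
      have hint : ∀ s ∈ Set.uIcc (0:ℝ) t,
          HasDerivAt (fun s => Real.exp (L₂ * (t - s)) * (-(C * M) * (s / L₂ + 1 / L₂ ^ 2)))
            (Real.exp (L₂ * (t - s)) * (C * (M * s))) s := by
        intro s _
        have h1 : HasDerivAt (fun s : ℝ => Real.exp (L₂ * (t - s)))
            (Real.exp (L₂ * (t - s)) * -L₂) s := by
          have hin : HasDerivAt (fun s : ℝ => L₂ * (t - s)) (-L₂) s := by
            have := ((hasDerivAt_id s).const_sub t).const_mul L₂
            simpa using this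
          exact (Real.hasDerivAt_exp _).comp s hin
        have h2 : HasDerivAt (fun s : ℝ => -(C * M) * (s / L₂ + 1 / L₂ ^ 2))
            (-(C * M) * (1 / L₂)) s := by
          have := (((hasDerivAt_id s).div_const L₂).add_const (1 / L₂ ^ 2)).const_mul (-(C * M))
          simpa using this
        have h3 := h1.mul h2
        refine h3.congr_deriv (Eq.symm ?_)
        field_simp
        ring
      have hig : Continuous (fun s => Real.exp (L₂ * (t - s)) * (C * (M * s))) := by
        apply Continuous.mul
        · exact Real.continuous_exp.comp (continuous_const.mul (continuous_const.sub continuous_id))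
        · continuity
      have := intervalIntegral.integral_eq_sub_of_hasDerivAt hint (hig.intervalIntegrable _ _)
      rw [show (∫ s in (0:ℝ)..t, Real.exp (L₂ * (t - s)) * (C * (H 1 s))) =
          ∫ s in (0:ℝ)..t, Real.exp (L₂ * (t - s)) * (C * (M * s)) by
        apply intervalIntegral.integral_congr; intro s _
        show Real.exp (L₂ * (t - s)) * (C * H 1 s) = Real.exp (L₂ * (t - s)) * (C * (M * s))
        rw [hH1]]
      rw [this]
      simp only [sub_zero, sub_self, mul_zero, zero_div, zero_add]
      rw [Real.exp_zero]
      field_simp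
      ring
    rw [heval, hH1]
    -- convexity bound
    have hlam0 : 0 ≤ t / tstar := div_nonneg ht.1 htpos.le
    have hlam1 : t / tstar ≤ 1 := by
      rw [div_le_one htpos]; exact ht.2
    have hconv := convexOn_exp.2 (Set.mem_univ (0:ℝ)) (Set.mem_univ (L₂ * tstar))
      (by linarith : (0:ℝ) ≤ 1 - t / tstar) hlam0 (by ring)
    have ht' : (1 - t / tstar) • (0:ℝ) + (t / tstar) • (L₂ * tstar) = L₂ * t := by
      field_simp
      rw [smul_zero, zero_add, smul_eq_mul, div_mul_eq_mul_div, mul_comm tstar L₂, ← mul_assoc,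
        mul_div_assoc, div_self htpos.ne', mul_one]
    rw [ht'] at hconv
    rw [Real.exp_zero] at hconv
    have hexp : Real.exp (L₂ * tstar) = 1 + (L₂ + L₂ ^ 2 / C) * tstar := by linarith
    rw [hexp] at hconv
    have hclaim : Real.exp (L₂ * t) ≤ 1 + (L₂ + L₂ ^ 2 / C) * t := by
      have : (t / tstar) * tstar = t := by field_simp
      calc Real.exp (L₂ * t) ≤ (1 - t / tstar) * 1 + (t / tstar) * (1 + (L₂ + L₂ ^ 2 / C) * tstar) := hconv
        _ = 1 + (L₂ + L₂ ^ 2 / C) * ((t / tstar) * tstar) := by ring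
        _ = 1 + (L₂ + L₂ ^ 2 / C) * t := by rw [this]
    have h1 : Real.exp (L₂ * t) - 1 - L₂ * t ≤ L₂ ^ 2 / C * t := by
      have : (L₂ + L₂ ^ 2 / C) * t = L₂ * t + L₂ ^ 2 / C * t := by ring
      linarith [hclaim, this.symm.le]
    calc C * M / L₂ ^ 2 * (Real.exp (L₂ * t) - 1 - L₂ * t)
        ≤ C * M / L₂ ^ 2 * (L₂ ^ 2 / C * t) := by
          apply mul_le_mul_of_nonneg_left h1 (by positivity)
      _ = M * t := by field_simp
  | succ r hr ih =>
    intro t ht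
    rw [hHrec (r + 1) (by omega) t, hHrec r hr t]
    apply intervalIntegral.integral_mono_on ht.1
    · exact (((Real.continuous_exp.comp (continuous_const.mul
        (continuous_const.sub continuous_id))).mul
        (continuous_const.mul (hcont (r + 1) (by omega)))).intervalIntegrable _ _)
    · exact (((Real.continuous_exp.comp (continuous_const.mul
        (continuous_const.sub continuous_id))).mul
        (continuous_const.mul (hcont r hr))).intervalIntegrable _ _)
    · intro s hs
      have hsI : s ∈ Set.Icc 0 tstar := ⟨hs.1, hs.2.trans ht.2⟩
      have := ih s hsI
      have hepos := Real.exp_pos (L₂ * (t - s))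
      apply mul_le_mul_of_nonneg_left _ hepos.le
      exact mul_le_mul_of_nonneg_left this hC.le

include hL₂ hM hC htpos hroot hH1 hHrec in
lemma H_anti : ∀ a b, 1 ≤ b → b ≤ a → ∀ t ∈ Set.Icc 0 tstar, H a t ≤ H b t := by
  intro a b hb hba
  induction a, hba using Nat.le_induction with
  | base => intro t _; exact le_rfl
  | succ a ha ih =>
    intro t ht
    calc H (a + 1) t ≤ H a t := H_mono_step hL₂ hM hC htpos hroot hH1 hHrec a (hb.trans ha) t ht
      _ ≤ H b t := ih t ht

end Hprops


end StmtAux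


namespace StmtAux

lemma mem_nbrFinset_iff {Nv : ℕ} {E : Fin Nv → Fin Nv → Prop} [DecidableRel E]
    {κ j : Fin Nv} : j ∈ nbrFinset E κ ↔ j ≠ κ ∧ E j κ := by
  simp [nbrFinset]

end StmtAux

set_option maxHeartbeats 2000000

open StmtAux

/-- Deviation bound between the reference trajectory of a neighbor `ℓ ∈ N_i`
and its estimate by `i` (Proposition on neighbor reference trajectory
deviation): for consistent cell configurations,
`|χ_ℓ^{[i]}(t) − χ_ℓ^{[ℓ]}(t)| ≤ H_m(t)` for all `t ∈ [0, t*]`, where `t*` is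
the unique positive root of `e^{L₂ t} − (L₂ + L₂²/(L₁ √N_max)) t − 1 = 0` and
`H₁(t) = M t`, `H_{κ+1}(t) = ∫_0^t e^{L₂(t−s)} L₁ √N_max H_κ(s) ds`.  The reference solutions
`χ^{[i]}, χ^{[ℓ]}` are per the Definition of reference trajectories: if
`N_i^{m+1} = ∅` they solve the coupled system on `N̄_i^m`, else they solve it on
`N̄_i^{m−1}` with the agents in `N_i^m` held fixed at their initial points. -/
theorem stmt18 (Nv n : ℕ) (E : Fin Nv → Fin Nv → Prop) [DecidableRel E]
    (f : Fin Nv → EuclideanSpace ℝ (Fin n) → (Fin Nv → EuclideanSpace ℝ (Fin n)) →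
      EuclideanSpace ℝ (Fin n))
    (L₁ L₂ M : ℝ) (hL₁ : 0 < L₁) (hL₂ : 0 < L₂) (hM : 0 < M)
    (hbound : ∀ κ x b, ‖f κ x b‖ ≤ M)
    (hLip1 : ∀ κ x b b', ‖f κ x b - f κ x b'‖ ≤
      L₁ * Real.sqrt (∑ j ∈ nbrFinset E κ, ‖b j - b' j‖ ^ 2))
    (hLip2 : ∀ κ x x' b, ‖f κ x b - f κ x' b‖ ≤ L₂ * ‖x - x'‖)
    (Nmax : ℕ) (hNmax : Nmax = Finset.univ.sup fun κ => (nbrFinset E κ).card)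
    (hNmax1 : 1 ≤ Nmax)
    (m : ℕ) (hm : 1 ≤ m)
    (xGi xGl : Fin Nv → EuclideanSpace ℝ (Fin n))
    (i ℓ : Fin Nv) (hℓ : ℓ ∈ nbr E i)
    (hagree : ∀ κ ∈ nbar E i m ∩ nbar E ℓ m, xGi κ = xGl κ)
    (χi χl : Fin Nv → ℝ → EuclideanSpace ℝ (Fin n))
    (hIVPi :
      (nset E i (m + 1) = ∅ →
        (∀ κ ∈ nbar E i m, χi κ 0 = xGi κ) ∧
        (∀ κ ∈ nbar E i m, ∀ t ∈ Set.Ici (0:ℝ),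
          HasDerivWithinAt (χi κ) (f κ (χi κ t) (fun j => χi j t)) (Set.Ici 0) t)) ∧
      (nset E i (m + 1) ≠ ∅ →
        (∀ κ ∈ nbar E i (m - 1), χi κ 0 = xGi κ) ∧
        (∀ κ ∈ nbar E i (m - 1), ∀ t ∈ Set.Ici (0:ℝ),
          HasDerivWithinAt (χi κ) (f κ (χi κ t) (fun j => χi j t)) (Set.Ici 0) t) ∧
        (∀ κ ∈ nset E i m, ∀ t : ℝ, χi κ t = xGi κ)))
    (hIVPl :
      (nset E ℓ (m + 1) = ∅ →
        (∀ κ ∈ nbar E ℓ m, χl κ 0 = xGl κ) ∧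
        (∀ κ ∈ nbar E ℓ m, ∀ t ∈ Set.Ici (0:ℝ),
          HasDerivWithinAt (χl κ) (f κ (χl κ t) (fun j => χl j t)) (Set.Ici 0) t)) ∧
      (nset E ℓ (m + 1) ≠ ∅ →
        (∀ κ ∈ nbar E ℓ (m - 1), χl κ 0 = xGl κ) ∧
        (∀ κ ∈ nbar E ℓ (m - 1), ∀ t ∈ Set.Ici (0:ℝ),
          HasDerivWithinAt (χl κ) (f κ (χl κ t) (fun j => χl j t)) (Set.Ici 0) t) ∧
        (∀ κ ∈ nset E ℓ m, ∀ t : ℝ, χl κ t = xGl κ)))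
    (tstar : ℝ) (htpos : 0 < tstar)
    (hroot : Real.exp (L₂ * tstar)
      - (L₂ + L₂ ^ 2 / (L₁ * Real.sqrt (Nmax : ℝ))) * tstar - 1 = 0)
    (H : ℕ → ℝ → ℝ)
    (hH1 : ∀ t : ℝ, H 1 t = M * t)
    (hHrec : ∀ κ : ℕ, 1 ≤ κ → ∀ t : ℝ,
      H (κ + 1) t = ∫ s in (0:ℝ)..t,
        Real.exp (L₂ * (t - s)) * (L₁ * Real.sqrt (Nmax : ℝ) * H κ s)) :
    ∀ t ∈ Set.Icc (0:ℝ) tstar, ‖χi ℓ t - χl ℓ t‖ ≤ H m t := by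
  classical
  -- basic constants
  have hNmaxR : (1:ℝ) ≤ (Nmax : ℝ) := by exact_mod_cast hNmax1
  set C := L₁ * Real.sqrt (Nmax : ℝ) with hCdef
  have hsq1 : (1:ℝ) ≤ Real.sqrt (Nmax : ℝ) := by
    rw [show (1:ℝ) = Real.sqrt 1 by simp]
    exact Real.sqrt_le_sqrt hNmaxR
  have hC : 0 < C := by
    rw [hCdef]; exact mul_pos hL₁ (lt_of_lt_of_le one_pos hsq1)
  set Lam := L₂ + C + 1 with hLamdef
  -- H facts
  have Hcont := StmtAux.H_cont hH1 hHrec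
  have Hnonneg := StmtAux.H_nonneg hM hC hH1 hHrec
  have Hanti := StmtAux.H_anti hL₂ hM hC htpos hroot hH1 hHrec
  -- activity predicates
  set AI : Fin Nv → Prop := fun κ =>
    (nset E i (m + 1) = ∅ ∧ κ ∈ nbar E i m) ∨
    (nset E i (m + 1) ≠ ∅ ∧ κ ∈ nbar E i (m - 1)) with hAIdef
  set AL : Fin Nv → Prop := fun κ =>
    (nset E ℓ (m + 1) = ∅ ∧ κ ∈ nbar E ℓ m) ∨
    (nset E ℓ (m + 1) ≠ ∅ ∧ κ ∈ nbar E ℓ (m - 1)) with hALdef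
  set Dm : Fin Nv → Prop := fun κ => κ ∈ nbar E i m ∧ κ ∈ nbar E ℓ m with hDmdef
  have factI : ∀ κ, AI κ → (χi κ 0 = xGi κ ∧ ∀ t ∈ Set.Ici (0:ℝ),
      HasDerivWithinAt (χi κ) (f κ (χi κ t) (fun j => χi j t)) (Set.Ici 0) t) := by
    intro κ h
    rw [hAIdef] at h
    rcases h with ⟨he, hκ⟩ | ⟨he, hκ⟩
    · exact ⟨(hIVPi.1 he).1 κ hκ, fun t ht => (hIVPi.1 he).2 κ hκ t ht⟩
    · exact ⟨(hIVPi.2 he).1 κ hκ, fun t ht => (hIVPi.2 he).2.1 κ hκ t ht⟩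
  have factL : ∀ κ, AL κ → (χl κ 0 = xGl κ ∧ ∀ t ∈ Set.Ici (0:ℝ),
      HasDerivWithinAt (χl κ) (f κ (χl κ t) (fun j => χl j t)) (Set.Ici 0) t) := by
    intro κ h
    rw [hALdef] at h
    rcases h with ⟨he, hκ⟩ | ⟨he, hκ⟩
    · exact ⟨(hIVPl.1 he).1 κ hκ, fun t ht => (hIVPl.1 he).2 κ hκ t ht⟩
    · exact ⟨(hIVPl.2 he).1 κ hκ, fun t ht => (hIVPl.2 he).2.1 κ hκ t ht⟩
  have frozenI : ∀ κ, nset E i (m + 1) ≠ ∅ → κ ∈ nset E i m → ∀ t, χi κ t = xGi κ :=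
    fun κ he hκ t => (hIVPi.2 he).2.2 κ hκ t
  have frozenL : ∀ κ, nset E ℓ (m + 1) ≠ ∅ → κ ∈ nset E ℓ m → ∀ t, χl κ t = xGl κ :=
    fun κ he hκ t => (hIVPl.2 he).2.2 κ hκ t
  have classifyI : ∀ κ, κ ∈ nbar E i m →
      AI κ ∨ (nset E i (m + 1) ≠ ∅ ∧ κ ∈ nset E i m) := by
    intro κ hκ
    by_cases he : nset E i (m + 1) = ∅
    · left; rw [hAIdef]; exact Or.inl ⟨he, hκ⟩
    · rcases StmtAux.nbar_cases hκ with h | h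
      · left; rw [hAIdef]; exact Or.inr ⟨he, h⟩
      · exact Or.inr ⟨he, h⟩
  have classifyL : ∀ κ, κ ∈ nbar E ℓ m →
      AL κ ∨ (nset E ℓ (m + 1) ≠ ∅ ∧ κ ∈ nset E ℓ m) := by
    intro κ hκ
    by_cases he : nset E ℓ (m + 1) = ∅
    · left; rw [hALdef]; exact Or.inl ⟨he, hκ⟩
    · rcases StmtAux.nbar_cases hκ with h | h
      · left; rw [hALdef]; exact Or.inr ⟨he, h⟩
      · exact Or.inr ⟨he, h⟩
  have nbrI : ∀ κ, AI κ → ∀ j ∈ nbrFinset E κ, j ∈ nbar E i m := by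
    intro κ hκ j hj
    obtain ⟨hjne, hjE⟩ := mem_nbrFinset_iff.1 hj
    rw [hAIdef] at hκ
    rcases hκ with ⟨he, hκ⟩ | ⟨he, hκ⟩
    · obtain ⟨p, hpm, hpath⟩ := StmtAux.mem_nbar_iff.1 hκ
      exact StmtAux.nbar_absorb he (p + 1) j ⟨κ, hjE, hpath⟩
    · have := StmtAux.nbar_step hjE hκ
      rwa [Nat.sub_add_cancel hm] at this
  have nbrL : ∀ κ, AL κ → ∀ j ∈ nbrFinset E κ, j ∈ nbar E ℓ m := by
    intro κ hκ j hj
    obtain ⟨hjne, hjE⟩ := mem_nbrFinset_iff.1 hj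
    rw [hALdef] at hκ
    rcases hκ with ⟨he, hκ⟩ | ⟨he, hκ⟩
    · obtain ⟨p, hpm, hpath⟩ := StmtAux.mem_nbar_iff.1 hκ
      exact StmtAux.nbar_absorb he (p + 1) j ⟨κ, hjE, hpath⟩
    · have := StmtAux.nbar_step hjE hκ
      rwa [Nat.sub_add_cancel hm] at this
  have hag : ∀ κ, Dm κ → xGi κ = xGl κ := by
    intro κ hκ
    rw [hDmdef] at hκ
    exact hagree κ (Set.mem_inter hκ.1 hκ.2)
  -- level function
  set dl : Fin Nv → ℕ := fun κ =>
    if h : ∃ k, κ ∈ nbar E ℓ k then Nat.find h else 0 with hdldef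
  have hdl1 : ∀ κ, κ ∈ nbar E ℓ m → κ ∈ nbar E ℓ (dl κ) := by
    intro κ h
    have hex : ∃ k, κ ∈ nbar E ℓ k := ⟨m, h⟩
    rw [hdldef]
    simp only
    rw [dif_pos hex]
    exact Nat.find_spec hex
  have hdl2 : ∀ κ k, κ ∈ nbar E ℓ k → dl κ ≤ k := by
    intro κ k h
    have hex : ∃ k', κ ∈ nbar E ℓ k' := ⟨k, h⟩
    rw [hdldef]
    simp only
    rw [dif_pos hex]
    exact Nat.find_min' hex h
  set qq : Fin Nv → ℕ := fun κ => if AI κ ∧ AL κ then max 2 (m - dl κ) else 1 with hqqdef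
  have hqq1 : ∀ κ, 1 ≤ qq κ := by
    intro κ
    rw [hqqdef]
    simp only
    split <;> omega
  -- initial coincidence
  have hinit0 : ∀ κ, Dm κ → χi κ 0 = χl κ 0 := by
    intro κ hκ
    have hκ' := hκ
    rw [hDmdef] at hκ'
    have h1 : χi κ 0 = xGi κ := by
      rcases classifyI κ hκ'.1 with hA | ⟨hne, hf⟩
      · exact (factI κ hA).1
      · exact frozenI κ hne hf 0
    have h2 : χl κ 0 = xGl κ := by
      rcases classifyL κ hκ'.2 with hA | ⟨hne, hf⟩
      · exact (factL κ hA).1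
      · exact frozenL κ hne hf 0
    rw [h1, h2, hag κ hκ]
  -- continuity of deviations
  have hecont : ∀ κ, Dm κ → ContinuousOn (fun t => ‖χi κ t - χl κ t‖) (Set.Icc 0 tstar) := by
    intro κ hκ
    have hκ' := hκ
    rw [hDmdef] at hκ'
    have h1 : ContinuousOn (χi κ) (Set.Icc 0 tstar) := by
      rcases classifyI κ hκ'.1 with hA | ⟨hne, hf⟩
      · exact (StmtAux.cont_of_deriv (factI κ hA).2).mono Set.Icc_subset_Ici_self
      · exact continuousOn_const.congr (fun t _ => frozenI κ hne hf t)
    have h2 : ContinuousOn (χl κ) (Set.Icc 0 tstar) := by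
      rcases classifyL κ hκ'.2 with hA | ⟨hne, hf⟩
      · exact (StmtAux.cont_of_deriv (factL κ hA).2).mono Set.Icc_subset_Ici_self
      · exact continuousOn_const.congr (fun t _ => frozenL κ hne hf t)
    exact (h1.sub h2).norm
  -- neighbor level comparison
  have hqnbr : ∀ κ, Dm κ → AI κ → AL κ → ∀ j ∈ nbrFinset E κ,
      Dm j ∧ qq κ - 1 ≤ qq j := by
    intro κ hD hAIκ hALκ j hj
    obtain ⟨hjne, hjE⟩ := mem_nbrFinset_iff.1 hj
    have hD' := hD
    rw [hDmdef] at hD'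
    have hDj : Dm j := by
      rw [hDmdef]
      exact ⟨nbrI κ hAIκ j hj, nbrL κ hALκ j hj⟩
    refine ⟨hDj, ?_⟩
    have hDj' := hDj
    rw [hDmdef] at hDj'
    by_cases hA : AI j ∧ AL j
    · have hdlj : dl j ≤ dl κ + 1 :=
        hdl2 j (dl κ + 1) (StmtAux.nbar_step hjE (hdl1 κ hD'.2))
      rw [hqqdef]
      simp only
      rw [if_pos hA, if_pos ⟨hAIκ, hALκ⟩]
      omega
    · rw [hqqdef]
      simp only
      rw [if_neg hA, if_pos ⟨hAIκ, hALκ⟩]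
      suffices hsuf : m ≤ dl κ + 2 by omega
      have hcases : (nset E i (m + 1) ≠ ∅ ∧ j ∈ nset E i m) ∨
          (nset E ℓ (m + 1) ≠ ∅ ∧ j ∈ nset E ℓ m) := by
        rcases classifyI j hDj'.1 with h1 | h1
        · rcases classifyL j hDj'.2 with h2 | h2
          · exact absurd ⟨h1, h2⟩ hA
          · exact Or.inr h2
        · exact Or.inl h1
      rcases hcases with ⟨hne, hf⟩ | ⟨hne, hf⟩
      · -- j frozen in χi
        have h1 : j ∈ nbar E i (dl κ + 1 + 1) :=
          StmtAux.nbar_step hjE (StmtAux.nbar_transfer hℓ.2 (hdl1 κ hD'.2))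
        by_contra hcon
        push_neg at hcon
        have h2 : j ∈ nbar E i (m - 1) := StmtAux.nbar_mono (by omega) h1
        exact StmtAux.not_mem_nbar_of_mem_nset hm hf (by omega) h2
      · -- j frozen in χl
        have h1 : j ∈ nbar E ℓ (dl κ + 1) :=
          StmtAux.nbar_step hjE (hdl1 κ hD'.2)
        by_contra hcon
        push_neg at hcon
        have h2 : j ∈ nbar E ℓ (m - 1) := StmtAux.nbar_mono (by omega) h1
        exact StmtAux.not_mem_nbar_of_mem_nset hm hf (by omega) h2
  -- MASTER CLAIM
  have master : ∀ ε, 0 < ε → ∀ t ∈ Set.Icc (0:ℝ) tstar, ∀ κ, Dm κ →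
      ‖χi κ t - χl κ t‖ ≤ H (qq κ) t + ε * Real.exp (Lam * t) := by
    intro ε hε
    by_contra hcon
    push_neg at hcon
    obtain ⟨t₁, ht₁, κ₁, hκ₁, hlt₁⟩ := hcon
    set Bd : Fin Nv → ℝ → ℝ := fun κ t => H (qq κ) t + ε * Real.exp (Lam * t) with hBddef
    have hBdcont : ∀ κ, Continuous (Bd κ) := by
      intro κ
      rw [hBddef]
      exact (Hcont (qq κ) (hqq1 κ)).add (continuous_const.mul
        (Real.continuous_exp.comp (continuous_const.mul continuous_id)))
    set S : Set ℝ := ⋃ κ : Fin Nv,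
      {t | t ∈ Set.Icc (0:ℝ) tstar ∧ Dm κ ∧ Bd κ t ≤ ‖χi κ t - χl κ t‖} with hSdef
    have hSclosed : IsClosed S := by
      rw [hSdef]
      apply isClosed_iUnion_of_finite
      intro κ
      by_cases hκ : Dm κ
      · have heq : {t | t ∈ Set.Icc (0:ℝ) tstar ∧ Dm κ ∧ Bd κ t ≤ ‖χi κ t - χl κ t‖} =
            {t ∈ Set.Icc (0:ℝ) tstar | Bd κ t ≤ ‖χi κ t - χl κ t‖} := by
          ext t
          constructor
          · rintro ⟨h1, _, h3⟩; exact ⟨h1, h3⟩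
          · rintro ⟨h1, h3⟩; exact ⟨h1, hκ, h3⟩
        rw [heq]
        exact isClosed_Icc.isClosed_le (hBdcont κ).continuousOn (hecont κ hκ)
      · have heq : {t | t ∈ Set.Icc (0:ℝ) tstar ∧ Dm κ ∧ Bd κ t ≤ ‖χi κ t - χl κ t‖} =
            (∅ : Set ℝ) := by
          ext t
          simp only [Set.mem_setOf_eq, Set.mem_empty_iff_false, iff_false]
          rintro ⟨_, h2, _⟩
          exact hκ h2
        rw [heq]
        exact isClosed_empty
    have hSsub : S ⊆ Set.Icc (0:ℝ) tstar := by
      intro t ht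
      rw [hSdef] at ht
      obtain ⟨κ, h⟩ := Set.mem_iUnion.1 ht
      exact h.1
    have hSne : S.Nonempty := by
      refine ⟨t₁, ?_⟩
      rw [hSdef]
      exact Set.mem_iUnion.2 ⟨κ₁, ht₁, hκ₁, (hlt₁).le⟩
    have hSbdd : BddBelow S := ⟨0, fun x hx => (hSsub hx).1⟩
    set T := sInf S with hTdef
    have hTS : T ∈ S := hSclosed.csInf_mem hSne hSbdd
    have hTIcc : T ∈ Set.Icc (0:ℝ) tstar := hSsub hTS
    have hTmem := hTS
    rw [hSdef] at hTmem
    obtain ⟨κ₀, _, hκ₀D, hκ₀ge⟩ := Set.mem_iUnion.1 hTmem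
    have hκ₀D' := hκ₀D
    rw [hDmdef] at hκ₀D'
    have hTpos : 0 < T := by
      rcases eq_or_lt_of_le hTIcc.1 with h0 | h
      · exfalso
        rw [← h0] at hκ₀ge
        have h1 : ‖χi κ₀ 0 - χl κ₀ 0‖ = 0 := by
          rw [hinit0 κ₀ hκ₀D]; simp
        have h2 : 0 ≤ H (qq κ₀) 0 := Hnonneg (qq κ₀) (hqq1 κ₀) 0 le_rfl
        rw [hBddef] at hκ₀ge
        simp only [mul_zero, Real.exp_zero, mul_one] at hκ₀ge
        rw [h1] at hκ₀ge
        linarith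
      · exact h
    have hll : ∀ s ∈ Set.Ico (0:ℝ) T, ∀ κ, Dm κ →
        ‖χi κ s - χl κ s‖ ≤ Bd κ s := by
      intro s hs κ hκ
      by_contra hge
      push_neg at hge
      have hsS : s ∈ S := by
        rw [hSdef]
        exact Set.mem_iUnion.2 ⟨κ, ⟨hs.1, hs.2.le.trans hTIcc.2⟩, hκ, hge.le⟩
      have := csInf_le hSbdd hsS
      rw [← hTdef] at this
      exact absurd this (not_le.2 hs.2)
    have hS' : ∀ s ∈ Set.Icc (0:ℝ) T, ∀ κ, Dm κ →
        ‖χi κ s - χl κ s‖ ≤ Bd κ s := by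
      intro s hs κ hκ
      rcases lt_or_eq_of_le hs.2 with hlt | heq
      · exact hll s ⟨hs.1, hlt⟩ κ hκ
      · rw [heq]
        refine ContinuousWithinAt.closure_le (s := Set.Ico (0:ℝ) T)
          (f := fun t => ‖χi κ t - χl κ t‖) (g := Bd κ) ?_ ?_ ?_ ?_
        · rw [closure_Ico (ne_of_lt hTpos)]
          exact ⟨hTpos.le, le_rfl⟩
        · have hsub : Set.Ico (0:ℝ) T ⊆ Set.Icc (0:ℝ) tstar :=
            fun x hx => ⟨hx.1, hx.2.le.trans hTIcc.2⟩
          exact ((hecont κ hκ) T hTIcc).mono hsub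
        · exact (hBdcont κ).continuousAt.continuousWithinAt
        · exact fun y hy => hll y hy κ hκ
    -- classification of κ₀ at time T, in each case contradict hκ₀ge
    have hexpTpos := Real.exp_pos (Lam * T)
    rcases classifyI κ₀ hκ₀D'.1 with hAIκ₀ | ⟨hneI, hfI⟩
    · rcases classifyL κ₀ hκ₀D'.2 with hALκ₀ | ⟨hneL, hfL⟩
      · -- both active : Gronwall
        have hq2 : 2 ≤ qq κ₀ := by
          rw [hqqdef]; simp only; rw [if_pos ⟨hAIκ₀, hALκ₀⟩]; exact le_max_left _ _
        set r := qq κ₀ - 1 with hrdef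
        have hr1 : 1 ≤ r := by omega
        have hrq : r + 1 = qq κ₀ := by omega
        set φ : ℝ → ℝ := fun s => C * (H r s + ε * Real.exp (Lam * s)) with hφdef
        have hφc : Continuous φ := by
          rw [hφdef]
          exact continuous_const.mul ((Hcont r hr1).add (continuous_const.mul
            (Real.continuous_exp.comp (continuous_const.mul continuous_id))))
        obtain ⟨hiinit, hiode⟩ := factI κ₀ hAIκ₀
        obtain ⟨hlinit, hlode⟩ := factL κ₀ hALκ₀
        have hgc : ContinuousOn (fun t => χi κ₀ t - χl κ₀ t) (Set.Icc 0 T) :=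
          ((StmtAux.cont_of_deriv hiode).sub (StmtAux.cont_of_deriv hlode)).mono
            Set.Icc_subset_Ici_self
        have hgd : ∀ s ∈ Set.Ico (0:ℝ) T, HasDerivWithinAt (fun t => χi κ₀ t - χl κ₀ t)
            (f κ₀ (χi κ₀ s) (fun j => χi j s) - f κ₀ (χl κ₀ s) (fun j => χl j s))
            (Set.Ici s) s := fun s hs =>
          ((hiode s hs.1).sub (hlode s hs.1)).mono (Set.Ici_subset_Ici.2 hs.1)
        have hgb : ∀ s ∈ Set.Ico (0:ℝ) T,
            ‖f κ₀ (χi κ₀ s) (fun j => χi j s) - f κ₀ (χl κ₀ s) (fun j => χl j s)‖ ≤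
            L₂ * ‖χi κ₀ s - χl κ₀ s‖ + φ s := by
          intro s hs
          have hsI : s ∈ Set.Icc (0:ℝ) tstar := ⟨hs.1, hs.2.le.trans hTIcc.2⟩
          set W := H r s + ε * Real.exp (Lam * s) with hWdef
          have hW0 : 0 ≤ W := by
            rw [hWdef]
            have := Hnonneg r hr1 s hs.1
            positivity
          have hjbd : ∀ j ∈ nbrFinset E κ₀, ‖χi j s - χl j s‖ ≤ W := by
            intro j hj
            obtain ⟨hDj, hqj⟩ := hqnbr κ₀ hκ₀D hAIκ₀ hALκ₀ j hj
            have h1 := hS' s ⟨hs.1, hs.2.le⟩ j hDj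
            have h2 : H (qq j) s ≤ H r s := Hanti (qq j) r hr1 hqj s hsI
            rw [hBddef] at h1
            simp only at h1
            rw [hWdef]
            linarith
          have hsum : ∑ j ∈ nbrFinset E κ₀, ‖χi j s - χl j s‖ ^ 2 ≤ (Nmax : ℝ) * W ^ 2 := by
            calc ∑ j ∈ nbrFinset E κ₀, ‖χi j s - χl j s‖ ^ 2
                ≤ (nbrFinset E κ₀).card • W ^ 2 :=
                  Finset.sum_le_card_nsmul _ _ _
                    (fun j hj => pow_le_pow_left₀ (norm_nonneg _) (hjbd j hj) 2)
              _ = ((nbrFinset E κ₀).card : ℝ) * W ^ 2 := nsmul_eq_mul _ _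
              _ ≤ (Nmax : ℝ) * W ^ 2 := by
                  apply mul_le_mul_of_nonneg_right _ (by positivity)
                  exact_mod_cast hNmax ▸ Finset.le_sup (f := fun κ => (nbrFinset E κ).card)
                    (Finset.mem_univ κ₀)
          have hsqrt : Real.sqrt (∑ j ∈ nbrFinset E κ₀, ‖χi j s - χl j s‖ ^ 2) ≤
              Real.sqrt (Nmax : ℝ) * W := by
            calc Real.sqrt (∑ j ∈ nbrFinset E κ₀, ‖χi j s - χl j s‖ ^ 2)
                ≤ Real.sqrt ((Nmax : ℝ) * W ^ 2) := Real.sqrt_le_sqrt hsum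
              _ = Real.sqrt (Nmax : ℝ) * W := by
                  rw [Real.sqrt_mul (by positivity), Real.sqrt_sq hW0]
          calc ‖f κ₀ (χi κ₀ s) (fun j => χi j s) - f κ₀ (χl κ₀ s) (fun j => χl j s)‖
              ≤ ‖f κ₀ (χi κ₀ s) (fun j => χi j s) - f κ₀ (χl κ₀ s) (fun j => χi j s)‖ +
                ‖f κ₀ (χl κ₀ s) (fun j => χi j s) - f κ₀ (χl κ₀ s) (fun j => χl j s)‖ := by
                rw [← sub_add_sub_cancel (f κ₀ (χi κ₀ s) (fun j => χi j s))
                  (f κ₀ (χl κ₀ s) (fun j => χi j s)) (f κ₀ (χl κ₀ s) (fun j => χl j s))]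
                exact norm_add_le _ _
            _ ≤ L₂ * ‖χi κ₀ s - χl κ₀ s‖ +
                L₁ * Real.sqrt (∑ j ∈ nbrFinset E κ₀, ‖χi j s - χl j s‖ ^ 2) :=
                add_le_add (hLip2 κ₀ _ _ _) (hLip1 κ₀ _ _ _)
            _ ≤ L₂ * ‖χi κ₀ s - χl κ₀ s‖ + L₁ * (Real.sqrt (Nmax : ℝ) * W) := by
                have := mul_le_mul_of_nonneg_left hsqrt hL₁.le
                linarith
            _ = L₂ * ‖χi κ₀ s - χl κ₀ s‖ + φ s := by
                rw [hφdef, hWdef, hCdef]; ring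
        have hg0 : (fun t => χi κ₀ t - χl κ₀ t) 0 = 0 := by
          simp only
          rw [hinit0 κ₀ hκ₀D]
          simp
        have hgron := StmtAux.gronwall_aux hgc hgd hg0 hφc hgb T ⟨hTIcc.1, le_rfl⟩
        -- split the integral
        have cexp : Continuous fun s => Real.exp (L₂ * (T - s)) :=
          Real.continuous_exp.comp (continuous_const.mul (continuous_const.sub continuous_id))
        have hint1 : IntervalIntegrable (fun s => Real.exp (L₂ * (T - s)) * (C * H r s))
            MeasureTheory.volume 0 T :=
          (cexp.mul (continuous_const.mul (Hcont r hr1))).intervalIntegrable _ _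
        have hint2 : IntervalIntegrable
            (fun s => Real.exp (L₂ * (T - s)) * (C * (ε * Real.exp (Lam * s))))
            MeasureTheory.volume 0 T :=
          (cexp.mul (continuous_const.mul (continuous_const.mul
            (Real.continuous_exp.comp (continuous_const.mul continuous_id))))).intervalIntegrable _ _
        have hsplit : (∫ s in (0:ℝ)..T, Real.exp (L₂ * (T - s)) * φ s) =
            (∫ s in (0:ℝ)..T, Real.exp (L₂ * (T - s)) * (C * H r s)) +
            ∫ s in (0:ℝ)..T, Real.exp (L₂ * (T - s)) * (C * (ε * Real.exp (Lam * s))) := by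
          rw [← intervalIntegral.integral_add hint1 hint2]
          apply intervalIntegral.integral_congr
          intro s _
          show Real.exp (L₂ * (T - s)) * φ s = _
          rw [hφdef]
          ring
        have heval1 : (∫ s in (0:ℝ)..T, Real.exp (L₂ * (T - s)) * (C * H r s)) =
            H (r + 1) T := (hHrec r hr1 T).symm
        have heval2 : (∫ s in (0:ℝ)..T,
            Real.exp (L₂ * (T - s)) * (C * (ε * Real.exp (Lam * s)))) <
            ε * Real.exp (Lam * T) := by
          have h2a : (∫ s in (0:ℝ)..T, Real.exp (L₂ * (T - s)) * (C * (ε * Real.exp (Lam * s)))) =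
              (C * ε * Real.exp (L₂ * T)) * ∫ s in (0:ℝ)..T, Real.exp ((C + 1) * s) := by
            rw [← intervalIntegral.integral_const_mul]
            apply intervalIntegral.integral_congr
            intro s _
            show Real.exp (L₂ * (T - s)) * (C * (ε * Real.exp (Lam * s))) =
              C * ε * Real.exp (L₂ * T) * Real.exp ((C + 1) * s)
            have e1 : Real.exp (L₂ * (T - s)) * Real.exp (Lam * s) =
                Real.exp (L₂ * T) * Real.exp ((C + 1) * s) := by
              rw [← Real.exp_add, ← Real.exp_add, hLamdef]
              ring_nf
            calc Real.exp (L₂ * (T - s)) * (C * (ε * Real.exp (Lam * s)))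
                = (Real.exp (L₂ * (T - s)) * Real.exp (Lam * s)) * (C * ε) := by ring
              _ = (Real.exp (L₂ * T) * Real.exp ((C + 1) * s)) * (C * ε) := by rw [e1]
              _ = C * ε * Real.exp (L₂ * T) * Real.exp ((C + 1) * s) := by ring
          have h2b : (∫ s in (0:ℝ)..T, Real.exp ((C + 1) * s)) =
              (Real.exp ((C + 1) * T) - 1) / (C + 1) := by
            have hd : ∀ s ∈ Set.uIcc (0:ℝ) T,
                HasDerivAt (fun u => Real.exp ((C + 1) * u) / (C + 1))
                  (Real.exp ((C + 1) * s)) s := by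
              intro s _
              have h := (StmtAux.expK_hasDerivAt (C + 1) s).div_const (C + 1)
              refine h.congr_deriv (Eq.symm ?_)
              field_simp
            rw [intervalIntegral.integral_eq_sub_of_hasDerivAt hd
              ((Real.continuous_exp.comp (continuous_const.mul continuous_id)).intervalIntegrable _ _)]
            rw [mul_zero, Real.exp_zero]
            ring
          rw [h2a, h2b]
          have hX : (1:ℝ) < Real.exp ((C + 1) * T) := by
            have := Real.add_one_le_exp ((C + 1) * T)
            nlinarith
          have hP : 0 < ε * Real.exp (L₂ * T) := by positivity
          have hC1 : (0:ℝ) < C + 1 := by linarith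
          have hfrac : C * ((Real.exp ((C + 1) * T) - 1) / (C + 1)) ≤
              Real.exp ((C + 1) * T) - 1 := by
            have hd1 : C / (C + 1) ≤ 1 := by
              rw [div_le_one hC1]; linarith
            calc C * ((Real.exp ((C + 1) * T) - 1) / (C + 1))
                = (C / (C + 1)) * (Real.exp ((C + 1) * T) - 1) := by ring
              _ ≤ 1 * (Real.exp ((C + 1) * T) - 1) :=
                  mul_le_mul_of_nonneg_right hd1 (by linarith)
              _ = Real.exp ((C + 1) * T) - 1 := one_mul _
          have hexpT : Real.exp (Lam * T) = Real.exp (L₂ * T) * Real.exp ((C + 1) * T) := by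
            rw [← Real.exp_add, hLamdef]
            ring_nf
          rw [hexpT]
          calc C * ε * Real.exp (L₂ * T) * ((Real.exp ((C + 1) * T) - 1) / (C + 1))
              = (ε * Real.exp (L₂ * T)) * (C * ((Real.exp ((C + 1) * T) - 1) / (C + 1))) := by
                ring
            _ ≤ (ε * Real.exp (L₂ * T)) * (Real.exp ((C + 1) * T) - 1) :=
                mul_le_mul_of_nonneg_left hfrac hP.le
            _ < (ε * Real.exp (L₂ * T)) * Real.exp ((C + 1) * T) := by
                apply mul_lt_mul_of_pos_left _ hP
                linarith
            _ = ε * (Real.exp (L₂ * T) * Real.exp ((C + 1) * T)) := by ring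
        have hfinal : ‖χi κ₀ T - χl κ₀ T‖ < Bd κ₀ T := by
          rw [hBddef]
          simp only
          calc ‖χi κ₀ T - χl κ₀ T‖ ≤ ∫ s in (0:ℝ)..T, Real.exp (L₂ * (T - s)) * φ s := hgron
            _ = H (r + 1) T + ∫ s in (0:ℝ)..T,
                Real.exp (L₂ * (T - s)) * (C * (ε * Real.exp (Lam * s))) := by
                rw [hsplit, heval1]
            _ < H (r + 1) T + ε * Real.exp (Lam * T) := by linarith
            _ = H (qq κ₀) T + ε * Real.exp (Lam * T) := by rw [hrq]
        exact absurd hκ₀ge (not_le.2 hfinal)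
      · -- κ₀ active in χi, frozen in χl
        obtain ⟨hiinit, hiode⟩ := factI κ₀ hAIκ₀
        have hnotAL : ¬ AL κ₀ := by
          rw [hALdef]
          rintro (⟨he, _⟩ | ⟨_, hmem⟩)
          · exact hneL he
          · exact StmtAux.not_mem_nbar_of_mem_nset hm hfL (by omega) hmem
        have hqqκ₀ : qq κ₀ = 1 := by
          rw [hqqdef]
          simp only
          rw [if_neg (fun h => hnotAL h.2)]
        have hspeed : ∀ t ∈ Set.Ici (0:ℝ), ‖χi κ₀ t - χi κ₀ 0‖ ≤ M * t :=
          StmtAux.speed_bound hiode (fun t _ => hbound κ₀ _ _)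
        have hbnd : ‖χi κ₀ T - χl κ₀ T‖ ≤ M * T := by
          have h1 : χl κ₀ T = χi κ₀ 0 := by
            rw [frozenL κ₀ hneL hfL T, hiinit, hag κ₀ hκ₀D]
          rw [h1]
          exact hspeed T hTIcc.1
        have hfinal : ‖χi κ₀ T - χl κ₀ T‖ < Bd κ₀ T := by
          rw [hBddef]
          simp only
          rw [hqqκ₀, hH1]
          have hp : 0 < ε * Real.exp (Lam * T) := mul_pos hε hexpTpos
          linarith
        exact absurd hκ₀ge (not_le.2 hfinal)
    · rcases classifyL κ₀ hκ₀D'.2 with hALκ₀ | ⟨hneL, hfL⟩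
      · -- κ₀ frozen in χi, active in χl
        obtain ⟨hlinit, hlode⟩ := factL κ₀ hALκ₀
        have hnotAI : ¬ AI κ₀ := by
          rw [hAIdef]
          rintro (⟨he, _⟩ | ⟨_, hmem⟩)
          · exact hneI he
          · exact StmtAux.not_mem_nbar_of_mem_nset hm hfI (by omega) hmem
        have hqqκ₀ : qq κ₀ = 1 := by
          rw [hqqdef]
          simp only
          rw [if_neg (fun h => hnotAI h.1)]
        have hspeed : ∀ t ∈ Set.Ici (0:ℝ), ‖χl κ₀ t - χl κ₀ 0‖ ≤ M * t :=
          StmtAux.speed_bound hlode (fun t _ => hbound κ₀ _ _)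
        have hbnd : ‖χi κ₀ T - χl κ₀ T‖ ≤ M * T := by
          have h1 : χi κ₀ T = χl κ₀ 0 := by
            rw [frozenI κ₀ hneI hfI T, hlinit, hag κ₀ hκ₀D]
          rw [h1, norm_sub_rev]
          exact hspeed T hTIcc.1
        have hfinal : ‖χi κ₀ T - χl κ₀ T‖ < Bd κ₀ T := by
          rw [hBddef]
          simp only
          rw [hqqκ₀, hH1]
          nlinarith
        exact absurd hκ₀ge (not_le.2 hfinal)
      · -- frozen in both
        have hbnd : ‖χi κ₀ T - χl κ₀ T‖ = 0 := by
          rw [frozenI κ₀ hneI hfI T, frozenL κ₀ hneL hfL T, hag κ₀ hκ₀D]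
          simp
        have h2 : 0 ≤ H (qq κ₀) T := Hnonneg (qq κ₀) (hqq1 κ₀) T hTIcc.1
        have hfinal : ‖χi κ₀ T - χl κ₀ T‖ < Bd κ₀ T := by
          rw [hBddef]
          simp only
          rw [hbnd]
          have hp : 0 < ε * Real.exp (Lam * T) := mul_pos hε hexpTpos
          linarith
        exact absurd hκ₀ge (not_le.2 hfinal)
  -- conclude
  intro t ht
  have hℓ1 : ℓ ∈ nbar E i 1 :=
    StmtAux.mem_nbar_iff.2 ⟨1, le_rfl, ⟨i, hℓ.2, rfl⟩⟩
  have hDℓ : Dm ℓ := by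
    rw [hDmdef]
    exact ⟨StmtAux.nbar_mono hm hℓ1, StmtAux.self_mem_nbar ℓ m⟩
  have hb2 : ‖χi ℓ t - χl ℓ t‖ ≤ H (qq ℓ) t := by
    apply le_of_forall_pos_le_add
    intro ε hε
    have hx := master (ε / Real.exp (Lam * t)) (by positivity) t ht ℓ hDℓ
    rwa [div_mul_cancel₀ _ (ne_of_gt (Real.exp_pos _))] at hx
  have hALℓ : AL ℓ := by
    rw [hALdef]
    by_cases he : nset E ℓ (m + 1) = ∅
    · exact Or.inl ⟨he, StmtAux.self_mem_nbar ℓ m⟩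
    · exact Or.inr ⟨he, StmtAux.self_mem_nbar ℓ (m - 1)⟩
  by_cases hA : AI ℓ ∧ AL ℓ
  · have hdlℓ : dl ℓ = 0 := Nat.le_zero.1 (hdl2 ℓ 0 (StmtAux.self_mem_nbar ℓ 0))
    have hqqℓ : qq ℓ = max 2 m := by
      rw [hqqdef]
      simp only
      rw [if_pos hA, hdlℓ]
      norm_num
    have : H (qq ℓ) t ≤ H m t := by
      rw [hqqℓ]
      exact Hanti (max 2 m) m hm (le_max_right 2 m) t ht
    linarith
  · -- then m = 1
    have hnotAI : ¬ AI ℓ := fun h => hA ⟨h, hALℓ⟩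
    have hm1 : m = 1 := by
      by_contra hne1
      have hm2 : 2 ≤ m := by omega
      apply hnotAI
      rw [hAIdef]
      by_cases he : nset E i (m + 1) = ∅
      · exact Or.inl ⟨he, StmtAux.nbar_mono hm hℓ1⟩
      · exact Or.inr ⟨he, StmtAux.nbar_mono (by omega) hℓ1⟩
    have hqqℓ : qq ℓ = 1 := by
      rw [hqqdef]
      simp only
      rw [if_neg hA]
    rw [hqqℓ] at hb2
    rw [hm1]
    exact hb2
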